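/- Let A ∈ F_q^{d×a}, B₁ ∈ F_q^{d×b₁}, B₂ ∈ F_q^{d×b₂} be matrices of full column rank. Let r₁ = rk([B₁,A]) − rk(A), r₂ = rk([B₂,A]) − rk(A), and r₁₂ = rk([B₁,B₂,A]) − rk(A). Then for any non-negative integers n₁ ≤ r₁, n₂ ≤ r₂ with n₁ + n₂ ≤ r₁₂, there exist a submatrix B₁' consisting of n₁ columns of B₁ and a submatrix B₂' consisting of n₂ columns of B₂ such that the concatenated matrix [A, B₁', B₂'] has full column rank a + n₁ + n₂. -/

import Mathlib

open Submodule Set Module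

section Aux

variable {F V : Type*} [Field F] [AddCommGroup V] [Module F V]

/-- finrank of a sup in terms of the quotient image. -/
lemma aux_finrank_sup_eq [FiniteDimensional F V] (W U : Submodule F V) :
    finrank F ↥(W ⊔ U) = finrank F W + finrank F (U.map W.mkQ) := by
  have h1 := Submodule.finrank_sup_add_finrank_inf_eq W U
  set φ : ↥U →ₗ[F] V ⧸ W := W.mkQ.comp U.subtype with hφ
  have hr : LinearMap.range φ = U.map W.mkQ := by
    rw [hφ, LinearMap.range_comp, Submodule.range_subtype]
  have hk : LinearMap.ker φ = Submodule.comap U.subtype (W ⊓ U) := by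
    rw [hφ, LinearMap.ker_comp, Submodule.ker_mkQ]
    ext x; simp [x.2]
  have h2 := LinearMap.finrank_range_add_finrank_ker φ
  rw [hr, hk] at h2
  have h3 : finrank F (Submodule.comap U.subtype (W ⊓ U)) = finrank F ↥(W ⊓ U) :=
    (Submodule.comapSubtypeEquivOfLe inf_le_right).finrank_eq
  rw [h3] at h2
  omega

/-- finrank of `span (range c) ⊔ W` via the quotient. -/
lemma aux_key [FiniteDimensional F V] (W : Submodule F V) {ι : Type*} (c : ι → V) :
    finrank F ↥(span F (Set.range c) ⊔ W) =
      finrank F W + finrank F (span F (Set.range fun j => W.mkQ (c j))) := by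
  rw [sup_comm, aux_finrank_sup_eq W (span F (Set.range c)), Submodule.map_span,
    ← Set.range_comp]
  rfl

/-- Extend an independent finset inside a spanning finset to given cardinality. -/
lemma aux_extend [FiniteDimensional F V] {S t : Finset V} (hts : t ⊆ S)
    (hind : LinearIndependent F ((↑) : ↥(t : Set V) → V)) {n : ℕ}
    (hc : t.card ≤ n) (hn : n ≤ finrank F (span F (S : Set V))) :
    ∃ t' : Finset V, t ⊆ t' ∧ t' ⊆ S ∧ t'.card = n ∧
      LinearIndependent F ((↑) : ↥(t' : Set V) → V) := by
  obtain ⟨b, hbS, htb, hspan, hbind⟩ :=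
    exists_linearIndepOn_id_extension hind (Finset.coe_subset.2 hts)
  have hbfin : b.Finite := S.finite_toSet.subset hbS
  set B := hbfin.toFinset with hB
  have hBb : (B : Set V) = b := hbfin.coe_toFinset
  have hBind : LinearIndependent F ((↑) : ↥(B : Set V) → V) := by rw [hBb]; exact hbind
  have hspan_eq : span F (B : Set V) = span F (S : Set V) := by
    rw [hBb]
    exact le_antisymm (span_mono hbS) (span_le.2 hspan)
  have hcard : B.card = finrank F (span F (S : Set V)) := by
    rw [← hspan_eq]
    exact (finrank_span_finset_eq_card hBind).symm
  have htB : t ⊆ B := by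
    intro x hx
    rw [← Finset.mem_coe, hBb]
    exact htb hx
  obtain ⟨t', htt', ht'B, ht'card⟩ :=
    Finset.exists_subsuperset_card_eq htB hc (by omega)
  refine ⟨t', htt', ht'B.trans ?_, ht'card, LinearIndepOn.mono (v := id) hBind (Finset.coe_subset.2 ht'B)⟩
  intro x hx
  exact hbS (hBb ▸ Finset.mem_coe.2 hx)

variable [DecidableEq V]

/-- One exchange step. -/
lemma aux_step [FiniteDimensional F V] {S t u : Finset V} {n m : ℕ}
    (htS : t ⊆ S)
    (hindu : LinearIndependent F ((↑) : ↥(u : Set V) → V)) (hucard : u.card = m)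
    (hn : n ≤ finrank F (span F (S : Set V)))
    (hr : finrank F (span F ((t ∪ u : Finset V) : Set V)) + 1 ≤ n + m)
    {e : V} (heS : e ∈ S) (he : e ∉ span F ((t ∪ u : Finset V) : Set V)) :
    ∃ t' : Finset V, t' ⊆ S ∧ t'.card = n ∧
      LinearIndependent F ((↑) : ↥(t' : Set V) → V) ∧
      finrank F (span F ((t ∪ u : Finset V) : Set V)) <
        finrank F (span F ((t' ∪ u : Finset V) : Set V)) := by
  classical
  set P := span F ((t ∪ u : Finset V) : Set V) with hP
  set r := finrank F P with hrdef
  have hutu : (u : Set V) ⊆ ((t ∪ u : Finset V) : Set V) := by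
    rw [Finset.coe_union]; exact subset_union_right
  have hePu : e ∉ span F (u : Set V) := fun h => he (span_mono hutu h)
  have hins : LinearIndependent F ((↑) : ↥(insert e (u : Set V)) → V) :=
    LinearIndepOn.id_insert hindu hePu
  have hsub : insert e (u : Set V) ⊆ insert e ((t ∪ u : Finset V) : Set V) :=
    insert_subset_insert hutu
  obtain ⟨b, hb_sub, hub, hspanb, hbind⟩ := exists_linearIndepOn_id_extension hins hsub
  have hbfin : b.Finite := (((t ∪ u : Finset V) : Set V).toFinite.insert e).subset hb_sub
  set J := hbfin.toFinset with hJ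
  have hJb : (J : Set V) = b := hbfin.coe_toFinset
  have hJind : LinearIndependent F ((↑) : ↥(J : Set V) → V) := by rw [hJb]; exact hbind
  have hspanJ : span F (J : Set V) = span F (insert e ((t ∪ u : Finset V) : Set V)) := by
    rw [hJb]
    exact le_antisymm (span_mono hb_sub) (span_le.2 hspanb)
  have he0 : e ≠ 0 := fun h => he (h ▸ zero_mem P)
  have hJcard : J.card ≤ r + 1 := by
    have h1 : J.card = finrank F (span F (J : Set V)) :=
      (finrank_span_finset_eq_card hJind).symm
    rw [h1, hspanJ, span_insert, ← hP]
    have h2 := Submodule.finrank_sup_add_finrank_inf_eq (span F {e}) P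
    have h3 : finrank F (span F ({e} : Set V)) = 1 := finrank_span_singleton he0
    omega
  have huJ : u ⊆ J := by
    intro x hx
    rw [← Finset.mem_coe, hJb]
    exact hub (Or.inr hx)
  set s := J \ u with hs
  have hscard : s.card ≤ n := by
    rw [hs, Finset.card_sdiff_of_subset huJ]
    omega
  have hsS : s ⊆ S := by
    intro x hx
    rw [hs, Finset.mem_sdiff] at hx
    have hx1 : x ∈ (J : Set V) := hx.1
    rw [hJb] at hx1
    rcases hb_sub hx1 with h | h
    · exact h ▸ heS
    · rw [Finset.mem_coe, Finset.mem_union] at h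
      rcases h with h2 | h2
      · exact htS h2
      · exact absurd h2 hx.2
  have hsind : LinearIndependent F ((↑) : ↥(s : Set V) → V) :=
    LinearIndepOn.mono (v := id) hJind (Finset.coe_subset.2 Finset.sdiff_subset)
  obtain ⟨t', hst', ht'S, ht'card, ht'ind⟩ := aux_extend hsS hsind hscard hn
  refine ⟨t', ht'S, ht'card, ht'ind, ?_⟩
  have hJtu : (J : Set V) ⊆ ((t' ∪ u : Finset V) : Set V) := by
    intro x hx
    rw [Finset.mem_coe] at hx
    rw [Finset.coe_union]
    by_cases hxu : x ∈ u
    · exact Or.inr hxu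
    · exact Or.inl (Finset.mem_coe.2 (hst' (by rw [hs, Finset.mem_sdiff]; exact ⟨hx, hxu⟩)))
  have hle : span F (J : Set V) ≤ span F ((t' ∪ u : Finset V) : Set V) := span_mono hJtu
  have hPle : P ≤ span F ((t' ∪ u : Finset V) : Set V) := by
    rw [hP]
    refine le_trans ?_ hle
    rw [hspanJ]
    exact span_mono (subset_insert _ _)
  have heIn : e ∈ span F ((t' ∪ u : Finset V) : Set V) := by
    apply hle
    rw [hspanJ]
    exact subset_span (mem_insert _ _)
  by_contra hcon
  push_neg at hcon
  have heq : P = span F ((t' ∪ u : Finset V) : Set V) :=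
    Submodule.eq_of_le_of_finrank_le hPle hcon
  exact he (heq ▸ heIn)

/-- Two-block exchange lemma. -/
lemma aux_exchange [FiniteDimensional F V] (S₁ S₂ : Finset V) (n₁ n₂ : ℕ)
    (h₁ : n₁ ≤ finrank F (span F (S₁ : Set V)))
    (h₂ : n₂ ≤ finrank F (span F (S₂ : Set V)))
    (h₁₂ : n₁ + n₂ ≤ finrank F (span F ((S₁ ∪ S₂ : Finset V) : Set V))) :
    ∃ t₁ t₂ : Finset V, t₁ ⊆ S₁ ∧ t₂ ⊆ S₂ ∧ t₁.card = n₁ ∧ t₂.card = n₂ ∧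
      finrank F (span F ((t₁ ∪ t₂ : Finset V) : Set V)) = n₁ + n₂ := by
  classical
  set good : Finset V × Finset V → Prop := fun p =>
    p.1 ⊆ S₁ ∧ p.2 ⊆ S₂ ∧ p.1.card = n₁ ∧ p.2.card = n₂ ∧
      LinearIndependent F ((↑) : ↥(p.1 : Set V) → V) ∧
      LinearIndependent F ((↑) : ↥(p.2 : Set V) → V) with hgood
  set Pset : Finset (Finset V × Finset V) :=
    (S₁.powerset ×ˢ S₂.powerset).filter good with hPset
  have hmem : ∀ p, p ∈ Pset ↔ good p := by
    intro p
    rw [hPset, Finset.mem_filter, Finset.mem_product, Finset.mem_powerset, Finset.mem_powerset]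
    exact ⟨fun h => h.2, fun h => ⟨⟨h.1, h.2.1⟩, h⟩⟩
  have hempty : LinearIndependent F ((↑) : ↥((∅ : Finset V) : Set V) → V) := by
    rw [Finset.coe_empty]; exact linearIndependent_empty F V
  obtain ⟨t10, _, ht₁S, ht₁c, ht₁i⟩ :=
    aux_extend (Finset.empty_subset S₁) hempty (Nat.zero_le n₁) h₁
  obtain ⟨t20, _, ht₂S, ht₂c, ht₂i⟩ :=
    aux_extend (Finset.empty_subset S₂) hempty (Nat.zero_le n₂) h₂
  have hne : Pset.Nonempty :=
    ⟨(t10, t20), (hmem _).2 ⟨ht₁S, ht₂S, ht₁c, ht₂c, ht₁i, ht₂i⟩⟩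
  obtain ⟨p, hpPset, hpmax⟩ := Pset.exists_max_image
    (fun p => finrank F (span F ((p.1 ∪ p.2 : Finset V) : Set V))) hne
  obtain ⟨hpS₁, hpS₂, hpc₁, hpc₂, hpi₁, hpi₂⟩ := (hmem p).1 hpPset
  set r := finrank F (span F ((p.1 ∪ p.2 : Finset V) : Set V)) with hr
  have hrle : r ≤ n₁ + n₂ := by
    calc r ≤ (p.1 ∪ p.2).card := finrank_span_finset_le_card _
    _ ≤ p.1.card + p.2.card := Finset.card_union_le _ _
    _ = n₁ + n₂ := by rw [hpc₁, hpc₂]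
  refine ⟨p.1, p.2, hpS₁, hpS₂, hpc₁, hpc₂, ?_⟩
  by_contra hcon
  have hrlt : r + 1 ≤ n₁ + n₂ := by omega
  -- find e outside the span
  have hex : ∃ e ∈ S₁ ∪ S₂, e ∉ span F ((p.1 ∪ p.2 : Finset V) : Set V) := by
    by_contra hall
    push_neg at hall
    have : span F ((S₁ ∪ S₂ : Finset V) : Set V) ≤ span F ((p.1 ∪ p.2 : Finset V) : Set V) := by
      rw [span_le]
      intro x hx
      exact hall x (Finset.mem_coe.1 hx)
    have := Submodule.finrank_mono this
    omega
  obtain ⟨e, heS, he⟩ := hex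
  rw [Finset.mem_union] at heS
  rcases heS with heS | heS
  · obtain ⟨t', ht'S, ht'c, ht'i, ht'lt⟩ :=
      aux_step hpS₁ hpi₂ hpc₂ h₁ hrlt heS he
    have hmem' : (t', p.2) ∈ Pset := (hmem _).2 ⟨ht'S, hpS₂, ht'c, hpc₂, ht'i, hpi₂⟩
    have := hpmax _ hmem'
    simp only at this
    omega
  · have hcomm : (p.1 ∪ p.2 : Finset V) = (p.2 ∪ p.1 : Finset V) := Finset.union_comm _ _
    have hreq : finrank F (span F ((p.1 ∪ p.2 : Finset V) : Set V)) =
        finrank F (span F ((p.2 ∪ p.1 : Finset V) : Set V)) := by rw [hcomm]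
    rw [hcomm] at he
    have hrlt' : finrank F (span F ((p.2 ∪ p.1 : Finset V) : Set V)) + 1 ≤ n₂ + n₁ := by omega
    obtain ⟨t', ht'S, ht'c, ht'i, ht'lt⟩ :=
      aux_step hpS₂ hpi₁ hpc₁ h₂ hrlt' heS he
    have hmem' : (p.1, t') ∈ Pset := (hmem _).2 ⟨hpS₁, ht'S, hpc₁, ht'c, hpi₁, ht'i⟩
    have := hpmax _ hmem'
    simp only at this
    have hcomm2 : (p.1 ∪ t' : Finset V) = (t' ∪ p.1 : Finset V) := Finset.union_comm _ _
    rw [hcomm2] at this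
    omega

end Aux

open Matrix

/-- Lemma 2 (two-block Steinitz-type column selection).
If `A`, `B₁`, `B₂` have full column rank, `r₁ = rk([B₁,A]) - rk(A)`,
`r₂ = rk([B₂,A]) - rk(A)`, `r₁₂ = rk([B₁,B₂,A]) - rk(A)`, then for any
`n₁ ≤ r₁`, `n₂ ≤ r₂` with `n₁ + n₂ ≤ r₁₂` there exist selections of `n₁`
distinct columns of `B₁` and `n₂` distinct columns of `B₂` such that
`[A, B₁', B₂']` has full column rank `a + n₁ + n₂`. -/
theorem column_selection_two
    {F : Type*} [Field F] [Fintype F] [DecidableEq F]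
    {d a b₁ b₂ : ℕ}
    (A : Matrix (Fin d) (Fin a) F)
    (B₁ : Matrix (Fin d) (Fin b₁) F) (B₂ : Matrix (Fin d) (Fin b₂) F)
    (hA : A.rank = a) (hB₁ : B₁.rank = b₁) (hB₂ : B₂.rank = b₂)
    (n₁ n₂ : ℕ)
    (hn₁ : n₁ ≤ (Matrix.fromCols B₁ A).rank - A.rank)
    (hn₂ : n₂ ≤ (Matrix.fromCols B₂ A).rank - A.rank)
    (hn₁₂ : n₁ + n₂ ≤ (Matrix.fromCols (Matrix.fromCols B₁ B₂) A).rank - A.rank) :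
    ∃ (f₁ : Fin n₁ → Fin b₁) (f₂ : Fin n₂ → Fin b₂),
      Function.Injective f₁ ∧ Function.Injective f₂ ∧
      (Matrix.fromCols A
        (Matrix.fromCols (B₁.submatrix id f₁) (B₂.submatrix id f₂))).rank
        = a + n₁ + n₂ := by
  classical
  set W : Submodule F (Fin d → F) := span F (Set.range Aᵀ) with hW
  have hWrank : finrank F W = a := by
    rw [hW]; exact (Matrix.rank_eq_finrank_span_cols A).symm.trans hA
  set x : Fin b₁ → (Fin d → F) ⧸ W := fun j => W.mkQ (B₁ᵀ j) with hx
  set y : Fin b₂ → (Fin d → F) ⧸ W := fun j => W.mkQ (B₂ᵀ j) with hy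
  set S₁ : Finset ((Fin d → F) ⧸ W) := Finset.image x Finset.univ with hS₁
  set S₂ : Finset ((Fin d → F) ⧸ W) := Finset.image y Finset.univ with hS₂
  have hS₁coe : (S₁ : Set ((Fin d → F) ⧸ W)) = Set.range x := by
    rw [hS₁]; simp
  have hS₂coe : (S₂ : Set ((Fin d → F) ⧸ W)) = Set.range y := by
    rw [hS₂]; simp
  -- generic rank computation for [C, A]
  have key : ∀ {ι : Type} [Fintype ι] (C : Matrix (Fin d) ι F),
      (Matrix.fromCols C A).rank
        = a + finrank F (span F (Set.range fun j => W.mkQ (Cᵀ j))) := by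
    intro ι _ C
    rw [Matrix.rank_eq_finrank_span_cols, Matrix.col, Matrix.transpose_fromCols]
    have h1 : Set.range (Matrix.fromRows Cᵀ Aᵀ) = Set.range Cᵀ ∪ Set.range Aᵀ :=
      Set.Sum.elim_range _ _
    rw [h1, span_union, ← hW, aux_key W Cᵀ, hWrank]
  have hrank1 : (Matrix.fromCols B₁ A).rank
      = a + finrank F (span F (Set.range x)) := by
    rw [hx]; exact key B₁
  have hrank2 : (Matrix.fromCols B₂ A).rank
      = a + finrank F (span F (Set.range y)) := by
    rw [hy]; exact key B₂
  have helim : (fun j => W.mkQ ((Matrix.fromCols B₁ B₂)ᵀ j)) = Sum.elim x y := by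
    funext j; cases j <;> rfl
  have hrank12 : (Matrix.fromCols (Matrix.fromCols B₁ B₂) A).rank
      = a + finrank F (span F (Set.range x ∪ Set.range y)) := by
    rw [key (Matrix.fromCols B₁ B₂), helim, Set.Sum.elim_range]
  have hk₁ : n₁ ≤ finrank F (span F (S₁ : Set ((Fin d → F) ⧸ W))) := by
    rw [hS₁coe]
    rw [hrank1, hA] at hn₁
    omega
  have hk₂ : n₂ ≤ finrank F (span F (S₂ : Set ((Fin d → F) ⧸ W))) := by
    rw [hS₂coe]
    rw [hrank2, hA] at hn₂
    omega
  have hk₁₂ : n₁ + n₂ ≤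
      finrank F (span F ((S₁ ∪ S₂ : Finset ((Fin d → F) ⧸ W)) : Set ((Fin d → F) ⧸ W))) := by
    rw [Finset.coe_union, hS₁coe, hS₂coe]
    rw [hrank12, hA] at hn₁₂
    omega
  obtain ⟨t₁, t₂, ht₁S, ht₂S, ht₁c, ht₂c, hspan⟩ := aux_exchange S₁ S₂ n₁ n₂ hk₁ hk₂ hk₁₂
  -- construct f₁
  have hch₁ : ∀ v : {v // v ∈ t₁}, ∃ j : Fin b₁, x j = ↑v := by
    intro v
    have hv := ht₁S v.2
    rw [hS₁, Finset.mem_image] at hv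
    obtain ⟨j, _, hj⟩ := hv
    exact ⟨j, hj⟩
  choose g₁ hg₁ using hch₁
  have e₁ : Fin n₁ ≃ {v // v ∈ t₁} := (t₁.equivFin.trans (finCongr ht₁c)).symm
  set f₁ : Fin n₁ → Fin b₁ := fun i => g₁ (e₁ i) with hf₁
  have hxf₁ : ∀ i, x (f₁ i) = ↑(e₁ i) := fun i => hg₁ (e₁ i)
  have hinj₁ : Function.Injective f₁ := by
    intro i i' h
    exact e₁.injective (Subtype.ext (by rw [← hxf₁ i, ← hxf₁ i']; exact congrArg x h))
  have hrange₁ : Set.range (fun i => x (f₁ i)) = (t₁ : Set ((Fin d → F) ⧸ W)) := by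
    ext v
    constructor
    · rintro ⟨i, rfl⟩
      show x (f₁ i) ∈ (t₁ : Set ((Fin d → F) ⧸ W))
      rw [hxf₁]
      exact (e₁ i).2
    · intro hv
      refine ⟨e₁.symm ⟨v, hv⟩, ?_⟩
      show x (f₁ (e₁.symm ⟨v, hv⟩)) = v
      rw [hxf₁, Equiv.apply_symm_apply]
  -- construct f₂
  have hch₂ : ∀ v : {v // v ∈ t₂}, ∃ j : Fin b₂, y j = ↑v := by
    intro v
    have hv := ht₂S v.2
    rw [hS₂, Finset.mem_image] at hv
    obtain ⟨j, _, hj⟩ := hv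
    exact ⟨j, hj⟩
  choose g₂ hg₂ using hch₂
  have e₂ : Fin n₂ ≃ {v // v ∈ t₂} := (t₂.equivFin.trans (finCongr ht₂c)).symm
  set f₂ : Fin n₂ → Fin b₂ := fun i => g₂ (e₂ i) with hf₂
  have hyf₂ : ∀ i, y (f₂ i) = ↑(e₂ i) := fun i => hg₂ (e₂ i)
  have hinj₂ : Function.Injective f₂ := by
    intro i i' h
    exact e₂.injective (Subtype.ext (by rw [← hyf₂ i, ← hyf₂ i']; exact congrArg y h))
  have hrange₂ : Set.range (fun i => y (f₂ i)) = (t₂ : Set ((Fin d → F) ⧸ W)) := by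
    ext v
    constructor
    · rintro ⟨i, rfl⟩
      show y (f₂ i) ∈ (t₂ : Set ((Fin d → F) ⧸ W))
      rw [hyf₂]
      exact (e₂ i).2
    · intro hv
      refine ⟨e₂.symm ⟨v, hv⟩, ?_⟩
      show y (f₂ (e₂.symm ⟨v, hv⟩)) = v
      rw [hyf₂, Equiv.apply_symm_apply]
  refine ⟨f₁, f₂, hinj₁, hinj₂, ?_⟩
  -- final rank computation
  rw [Matrix.rank_eq_finrank_span_cols, Matrix.col, Matrix.transpose_fromCols,
    Matrix.transpose_fromCols, Matrix.transpose_submatrix, Matrix.transpose_submatrix]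
  have h1 : Set.range (Matrix.fromRows Aᵀ
        (Matrix.fromRows (B₁ᵀ.submatrix f₁ id) (B₂ᵀ.submatrix f₂ id)))
      = Set.range Aᵀ ∪ Set.range (Matrix.fromRows (B₁ᵀ.submatrix f₁ id) (B₂ᵀ.submatrix f₂ id)) :=
    Set.Sum.elim_range _ _
  have h2 : Set.range (Matrix.fromRows (B₁ᵀ.submatrix f₁ id) (B₂ᵀ.submatrix f₂ id))
      = Set.range (B₁ᵀ ∘ f₁) ∪ Set.range (B₂ᵀ ∘ f₂) :=
    Set.Sum.elim_range _ _
  have h3 : Set.range (B₁ᵀ ∘ f₁) ∪ Set.range (B₂ᵀ ∘ f₂)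
      = Set.range (Sum.elim (B₁ᵀ ∘ f₁) (B₂ᵀ ∘ f₂)) := (Set.Sum.elim_range _ _).symm
  rw [h1, h2, h3, Set.union_comm, span_union, ← hW, aux_key W _, hWrank]
  have helim2 : (fun j => W.mkQ (Sum.elim (B₁ᵀ ∘ f₁) (B₂ᵀ ∘ f₂) j))
      = Sum.elim (fun i => x (f₁ i)) (fun i => y (f₂ i)) := by
    funext j; cases j <;> rfl
  rw [helim2, Set.Sum.elim_range, hrange₁, hrange₂, ← Finset.coe_union, hspan]
  omega
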